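/- The three POPs (1,2;3,4;5), (1,2;4,3;5), and (1,2;4,5;3) are pairwise Wilf-equivalent. (Explicitly, (1,2;3,4;5) has only the strict relations 2 below 1 and 4 below 3, with 5 isolated; (1,2;4,3;5) has only the strict relations 2 below 1 and 3 below 4, with 5 isolated; (1,2;4,5;3) has only the strict relations 2 below 1 and 5 below 4, with 3 isolated.) -/
import Mathlib


/-- A partially ordered pattern (POP) of size `k`: a strict partial order on the
labels `{1, …, k}`, given by the relation `lt a b` meaning "`a` is strictly below `b`". -/
structure POP (k : ℕ) where
  lt : ℕ → ℕ → Prop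
  supp : ∀ a b, lt a b → 1 ≤ a ∧ a ≤ k ∧ 1 ≤ b ∧ b ≤ k
  irrefl : ∀ a, ¬ lt a a
  trans : ∀ a b c, lt a b → lt b c → lt a c

/-- An occurrence of the POP `p` in a permutation `π` of `{1, …, n}`:
indices `i₁ < ⋯ < i_k` with `π (i_a) < π (i_b)` whenever label `a` is strictly
below label `b` in `p` (everything 0-indexed internally). -/
def POP.Occurs {k : ℕ} (p : POP k) {n : ℕ} (π : Equiv.Perm (Fin n)) : Prop :=
  ∃ f : Fin k → Fin n, StrictMono f ∧
    ∀ a b : Fin k, p.lt ((a : ℕ) + 1) ((b : ℕ) + 1) → π (f a) < π (f b)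

/-- The number of permutations of `{1, …, n}` avoiding the POP `p`. -/
noncomputable def POP.avoiders {k : ℕ} (p : POP k) (n : ℕ) : ℕ :=
  Nat.card {π : Equiv.Perm (Fin n) // ¬ p.Occurs π}

/-- Wilf-equivalence of POPs: the same number of avoiding permutations for every `n ≥ 1`. -/
def WilfEquiv {k l : ℕ} (p : POP k) (q : POP l) : Prop :=
  ∀ n : ℕ, 1 ≤ n → p.avoiders n = q.avoiders n

/-- `σ` is a transversal of the Ferrers board with row lengths `lam`
(rows and columns 0-indexed): the 1 of column `j` lies in cell (row `σ j`, column `j`),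
which must lie inside the board. -/
def IsTransversal {n : ℕ} (lam : Fin n → ℕ) (σ : Equiv.Perm (Fin n)) : Prop :=
  ∀ j : Fin n, (j : ℕ) < lam (σ j)

/-- The transversal `σ` of the Ferrers board `lam` contains the POP `p`:
there are rows `r₁ < ⋯ < r_k`, columns `c₁ < ⋯ < c_k`, all cells `(r i, c j)` inside
the board, and a bijection `τ` with `σ (c j) = r (τ j)` and `τ a < τ b` whenever
`a` is strictly below `b` in `p`. -/
def POP.TContains {k : ℕ} (p : POP k) {n : ℕ} (lam : Fin n → ℕ)
    (σ : Equiv.Perm (Fin n)) : Prop :=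
  ∃ (r c : Fin k → Fin n) (τ : Equiv.Perm (Fin k)),
    StrictMono r ∧ StrictMono c ∧
    (∀ i j, (c j : ℕ) < lam (r i)) ∧
    (∀ j, σ (c j) = r (τ j)) ∧
    ∀ a b : Fin k, p.lt ((a : ℕ) + 1) ((b : ℕ) + 1) → τ a < τ b

/-- The number of transversals of the Ferrers board `lam` avoiding the POP `p`. -/
noncomputable def POP.shapeAvoiders {k : ℕ} (p : POP k) {n : ℕ} (lam : Fin n → ℕ) : ℕ :=
  Nat.card {σ : Equiv.Perm (Fin n) // IsTransversal lam σ ∧ ¬ p.TContains lam σ}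

/-- Shape-Wilf-equivalence of POPs: the same number of avoiding transversals for
every Ferrers board (a weakly decreasing positive row-length function). -/
def ShapeWilfEquiv {k l : ℕ} (p : POP k) (q : POP l) : Prop :=
  ∀ (n : ℕ) (lam : Fin n → ℕ), Antitone lam → (∀ i, 0 < lam i) →
    p.shapeAvoiders lam = q.shapeAvoiders lam

/-- The ordinal sum `p ⊕ q` of POPs: labels `1, …, k` ordered as in `p`, labels
`k+1, …, k+l` ordered as in `q` (shifted), and every label `≤ k` strictly below
every label `> k`. -/
def OrdSum {k l : ℕ} (p : POP k) (q : POP l) : POP (k + l) where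
  lt a b := (a ≤ k ∧ b ≤ k ∧ p.lt a b) ∨ (k < a ∧ k < b ∧ q.lt (a - k) (b - k)) ∨
    (1 ≤ a ∧ a ≤ k ∧ k < b ∧ b ≤ k + l)
  supp a b h := by
    rcases h with ⟨_, _, h⟩ | ⟨ha, hb, h⟩ | h
    · have := p.supp _ _ h; omega
    · have := q.supp _ _ h; omega
    · omega
  irrefl a h := by
    rcases h with ⟨_, _, h⟩ | ⟨_, _, h⟩ | h
    · exact p.irrefl _ h
    · exact q.irrefl _ h
    · omega
  trans a b c hab hbc := by
    rcases hab with ⟨ha, hb, h1⟩ | ⟨ha, hb, h1⟩ | h1 <;>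
      rcases hbc with ⟨hb', hc, h2⟩ | ⟨hb', hc, h2⟩ | h2
    · exact Or.inl ⟨ha, hc, p.trans _ _ _ h1 h2⟩
    · omega
    · have := p.supp _ _ h1; right; right; omega
    · omega
    · exact Or.inr (Or.inl ⟨ha, hc, q.trans _ _ _ h1 h2⟩)
    · omega
    · omega
    · have := q.supp _ _ h2; right; right; omega
    · omega

/-- The disjoint sum `p + q` of POPs: labels `1, …, k` ordered as in `p`, labels
`k+1, …, k+l` ordered as in `q` (shifted), and no relations between the two parts. -/
def DisjSum {k l : ℕ} (p : POP k) (q : POP l) : POP (k + l) where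
  lt a b := (a ≤ k ∧ b ≤ k ∧ p.lt a b) ∨ (k < a ∧ k < b ∧ q.lt (a - k) (b - k))
  supp a b h := by
    rcases h with ⟨_, _, h⟩ | ⟨ha, hb, h⟩
    · have := p.supp _ _ h; omega
    · have := q.supp _ _ h; omega
  irrefl a h := by
    rcases h with ⟨_, _, h⟩ | ⟨_, _, h⟩
    · exact p.irrefl _ h
    · exact q.irrefl _ h
  trans a b c hab hbc := by
    rcases hab with ⟨ha, hb, h1⟩ | ⟨ha, hb, h1⟩ <;>
      rcases hbc with ⟨hb', hc, h2⟩ | ⟨hb', hc, h2⟩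
    · exact Or.inl ⟨ha, hc, p.trans _ _ _ h1 h2⟩
    · omega
    · omega
    · exact Or.inr ⟨ha, hc, q.trans _ _ _ h1 h2⟩

/-- The label `i` is isolated in the POP `p`: it is a label of `p` incomparable
to every other label. -/
def POP.Isolated {k : ℕ} (p : POP k) (i : ℕ) : Prop :=
  1 ≤ i ∧ i ≤ k ∧ ∀ j, ¬ p.lt i j ∧ ¬ p.lt j i

/-- The restriction of the POP `p` to the initial labels `{1, …, m}`. -/
def POP.restrictInit {k : ℕ} (p : POP k) (m : ℕ) : POP m where
  lt a b := a ≤ m ∧ b ≤ m ∧ p.lt a b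
  supp a b h := by have := p.supp _ _ h.2.2; omega
  irrefl a h := p.irrefl a h.2.2
  trans a b c h1 h2 := ⟨h1.1, h2.2.1, p.trans _ _ _ h1.2.2 h2.2.2⟩

/-- The reverse `r(p)` of a POP of size `k`: `a` is strictly below `b` iff
`k+1-a` is strictly below `k+1-b` in `p`. -/
def POP.rev {k : ℕ} (p : POP k) : POP k where
  lt a b := a ≤ k ∧ b ≤ k ∧ p.lt (k + 1 - a) (k + 1 - b)
  supp a b h := by
    obtain ⟨h1, h2, h3⟩ := h
    have := p.supp _ _ h3; omega
  irrefl a h := p.irrefl _ h.2.2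
  trans a b c h1 h2 := ⟨h1.1, h2.2.1, p.trans _ _ _ h1.2.2 h2.2.2⟩

/-- The POP `(1,2;3,4;5)`: only relations `2 < 1` and `4 < 3`, label `5` isolated. -/
def pop12c34i5 : POP 5 where
  lt a b := (a = 2 ∧ b = 1) ∨
    (a = 4 ∧ b = 3)
  supp a b h := by omega
  irrefl a h := by omega
  trans a b c h1 h2 := by omega

/-- The POP `(1,2;4,3;5)`: only relations `2 < 1` and `3 < 4`, label `5` isolated. -/
def pop12c43i5 : POP 5 where
  lt a b := (a = 2 ∧ b = 1) ∨
    (a = 3 ∧ b = 4)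
  supp a b h := by omega
  irrefl a h := by omega
  trans a b c h1 h2 := by omega

/-- The POP `(1,2;4,5;3)`: only relations `2 < 1` and `5 < 4`, label `3` isolated. -/
def pop12c45i3 : POP 5 where
  lt a b := (a = 2 ∧ b = 1) ∨
    (a = 5 ∧ b = 4)
  supp a b h := by omega
  irrefl a h := by omega
  trans a b c h1 h2 := by omega

namespace Stmt16Aux

def Inc (v : ℕ → ℕ) (a b : ℕ) : Prop := ∀ i j, a ≤ i → i < j → j ≤ b → v i < v j

def Dec' (v : ℕ → ℕ) (a b : ℕ) : Prop := ∀ i j, a ≤ i → i < j → j ≤ b → v j < v i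

def OccA (n : ℕ) (v : ℕ → ℕ) : Prop :=
  ∃ i0 i1 i2 i3 i4, i0 < i1 ∧ i1 < i2 ∧ i2 < i3 ∧ i3 < i4 ∧ i4 < n ∧ v i1 < v i0 ∧ v i3 < v i2

def OccB (n : ℕ) (v : ℕ → ℕ) : Prop :=
  ∃ i0 i1 i2 i3 i4, i0 < i1 ∧ i1 < i2 ∧ i2 < i3 ∧ i3 < i4 ∧ i4 < n ∧ v i1 < v i0 ∧ v i2 < v i3

def OccC (n : ℕ) (v : ℕ → ℕ) : Prop :=
  ∃ i0 i1 i2 i3 i4, i0 < i1 ∧ i1 < i2 ∧ i2 < i3 ∧ i3 < i4 ∧ i4 < n ∧ v i1 < v i0 ∧ v i4 < v i3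

def WA (n : ℕ) (v : ℕ → ℕ) (s : ℕ) : Prop :=
  s ≤ n - 2 ∧ Inc v 0 (s - 1) ∧ Inc v (s + 1) (n - 2)

def WB (n : ℕ) (v : ℕ → ℕ) (s : ℕ) : Prop :=
  s ≤ n - 2 ∧ Inc v 0 (s - 1) ∧ Dec' v (s + 1) (n - 2)

def WC (n : ℕ) (v : ℕ → ℕ) (s : ℕ) : Prop :=
  s ≤ n - 2 ∧ Inc v 0 (s - 1) ∧ Inc v (s + 2) (n - 1)

section Char

variable {n : ℕ} {v : ℕ → ℕ}

theorem charA (vinj : ∀ i j, i < n → j < n → v i = v j → i = j) :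
    ¬ OccA n v ↔ ∃ s, WA n v s := by
  constructor
  · intro hno
    by_cases hI : Inc v 0 (n - 2)
    · exact ⟨n - 2, le_rfl, fun i j h1 h2 h3 => hI i j h1 h2 (by omega),
        fun i j h1 h2 h3 => absurd h2 (by omega)⟩
    · have hex : ∃ b, b ≤ n - 2 ∧ ∃ a, a < b ∧ v b < v a := by
        simp only [Inc, not_forall] at hI
        obtain ⟨i, j, h1, h2, h3, h4⟩ := hI
        have hne : v j ≠ v i := fun h => by
          have := vinj j i (by omega) (by omega) h; omega
        exact ⟨j, h3, i, h2, lt_of_le_of_ne (Nat.not_lt.mp h4) hne⟩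
      classical
      obtain ⟨hsle, a, has, hva⟩ := Nat.find_spec hex
      refine ⟨Nat.find hex, hsle, ?_, ?_⟩
      · intro i j h1 h2 h3
        by_contra hc
        have hne : v j ≠ v i := fun h => by
          have := vinj j i (by omega) (by omega) h; omega
        exact Nat.find_min hex (by omega)
          ⟨by omega, i, h2, lt_of_le_of_ne (Nat.not_lt.mp hc) hne⟩
      · intro c d h1 h2 h3
        by_contra hc
        have hne : v d ≠ v c := fun h => by
          have := vinj d c (by omega) (by omega) h; omega
        exact hno ⟨a, Nat.find hex, c, d, n - 1, has, by omega, h2, by omega, by omega,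
          hva, lt_of_le_of_ne (Nat.not_lt.mp hc) hne⟩
  · rintro ⟨s, hsle, hr1, hr2⟩ ⟨i0, i1, i2, i3, i4, o1, o2, o3, o4, o5, w1, w2⟩
    by_cases h : i2 ≤ s
    · exact absurd (hr1 i0 i1 (Nat.zero_le _) o1 (by omega)) (by omega)
    · exact absurd (hr2 i2 i3 (by omega) o3 (by omega)) (by omega)

theorem charB (vinj : ∀ i j, i < n → j < n → v i = v j → i = j) :
    ¬ OccB n v ↔ ∃ s, WB n v s := by
  constructor
  · intro hno
    by_cases hI : Inc v 0 (n - 2)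
    · exact ⟨n - 2, le_rfl, fun i j h1 h2 h3 => hI i j h1 h2 (by omega),
        fun i j h1 h2 h3 => absurd h2 (by omega)⟩
    · have hex : ∃ b, b ≤ n - 2 ∧ ∃ a, a < b ∧ v b < v a := by
        simp only [Inc, not_forall] at hI
        obtain ⟨i, j, h1, h2, h3, h4⟩ := hI
        have hne : v j ≠ v i := fun h => by
          have := vinj j i (by omega) (by omega) h; omega
        exact ⟨j, h3, i, h2, lt_of_le_of_ne (Nat.not_lt.mp h4) hne⟩
      classical
      obtain ⟨hsle, a, has, hva⟩ := Nat.find_spec hex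
      refine ⟨Nat.find hex, hsle, ?_, ?_⟩
      · intro i j h1 h2 h3
        by_contra hc
        have hne : v j ≠ v i := fun h => by
          have := vinj j i (by omega) (by omega) h; omega
        exact Nat.find_min hex (by omega)
          ⟨by omega, i, h2, lt_of_le_of_ne (Nat.not_lt.mp hc) hne⟩
      · intro c d h1 h2 h3
        by_contra hc
        have hne : v c ≠ v d := fun h => by
          have := vinj c d (by omega) (by omega) h; omega
        exact hno ⟨a, Nat.find hex, c, d, n - 1, has, by omega, h2, by omega, by omega,
          hva, lt_of_le_of_ne (Nat.not_lt.mp hc) hne⟩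
  · rintro ⟨s, hsle, hr1, hr2⟩ ⟨i0, i1, i2, i3, i4, o1, o2, o3, o4, o5, w1, w2⟩
    by_cases h : i2 ≤ s
    · exact absurd (hr1 i0 i1 (Nat.zero_le _) o1 (by omega)) (by omega)
    · exact absurd (hr2 i2 i3 (by omega) o3 (by omega)) (by omega)

theorem charC (vinj : ∀ i j, i < n → j < n → v i = v j → i = j) :
    ¬ OccC n v ↔ ∃ s, WC n v s := by
  constructor
  · intro hno
    by_cases hI : Inc v 0 (n - 2)
    · exact ⟨n - 2, le_rfl, fun i j h1 h2 h3 => hI i j h1 h2 (by omega),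
        fun i j h1 h2 h3 => absurd h2 (by omega)⟩
    · have hex : ∃ b, b ≤ n - 2 ∧ ∃ a, a < b ∧ v b < v a := by
        simp only [Inc, not_forall] at hI
        obtain ⟨i, j, h1, h2, h3, h4⟩ := hI
        have hne : v j ≠ v i := fun h => by
          have := vinj j i (by omega) (by omega) h; omega
        exact ⟨j, h3, i, h2, lt_of_le_of_ne (Nat.not_lt.mp h4) hne⟩
      classical
      obtain ⟨hsle, a, has, hva⟩ := Nat.find_spec hex
      refine ⟨Nat.find hex, hsle, ?_, ?_⟩
      · intro i j h1 h2 h3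
        by_contra hc
        have hne : v j ≠ v i := fun h => by
          have := vinj j i (by omega) (by omega) h; omega
        exact Nat.find_min hex (by omega)
          ⟨by omega, i, h2, lt_of_le_of_ne (Nat.not_lt.mp hc) hne⟩
      · intro c d h1 h2 h3
        by_contra hc
        have hne : v d ≠ v c := fun h => by
          have := vinj d c (by omega) (by omega) h; omega
        exact hno ⟨a, Nat.find hex, Nat.find hex + 1, c, d, has, by omega, by omega, h2,
          by omega, hva, lt_of_le_of_ne (Nat.not_lt.mp hc) hne⟩
  · rintro ⟨s, hsle, hr1, hr2⟩ ⟨i0, i1, i2, i3, i4, o1, o2, o3, o4, o5, w1, w2⟩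
    by_cases h : i3 ≤ s + 1
    · exact absurd (hr1 i0 i1 (Nat.zero_le _) o1 (by omega)) (by omega)
    · exact absurd (hr2 i3 i4 (by omega) o4 (by omega)) (by omega)

end Char

end Stmt16Aux
namespace Stmt16Aux

section Transfer

variable {n s : ℕ} {v w : ℕ → ℕ}

theorem AC_mp (hw1 : ∀ j, j ≤ s → w j = v j)
    (hw3 : ∀ j, s + 2 ≤ j → j ≤ n - 1 → w j = v (j - 1))
    (h : WA n v s) : WC n w s := by
  obtain ⟨hsle, h1, h2⟩ := h
  refine ⟨hsle, ?_, ?_⟩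
  · intro i j hi hij hj
    rw [hw1 i (by omega), hw1 j (by omega)]
    exact h1 i j hi hij hj
  · intro i j hi hij hj
    rw [hw3 i (by omega) (by omega), hw3 j (by omega) (by omega)]
    exact h2 (i - 1) (j - 1) (by omega) (by omega) (by omega)

theorem AC_mpr (hw1 : ∀ j, j ≤ s → w j = v j)
    (hw3 : ∀ j, s + 2 ≤ j → j ≤ n - 1 → w j = v (j - 1))
    (h : WC n w s) : WA n v s := by
  obtain ⟨hsle, h1, h2⟩ := h
  refine ⟨hsle, ?_, ?_⟩
  · intro i j hi hij hj
    rw [← hw1 i (by omega), ← hw1 j (by omega)]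
    exact h1 i j hi hij hj
  · intro i j hi hij hj
    have e1 : w (i + 1) = v i := by
      have h' := hw3 (i + 1) (by omega) (by omega); simpa using h'
    have e2 : w (j + 1) = v j := by
      have h' := hw3 (j + 1) (by omega) (by omega); simpa using h'
    rw [← e1, ← e2]
    exact h2 (i + 1) (j + 1) (by omega) (by omega) (by omega)

theorem maxAC1 (hw1 : ∀ j, j ≤ s → w j = v j) {s' : ℕ}
    (hA : WA n v s) (hC : WC n w s') (hss : s < s') : WA n v (s + 1) := by
  obtain ⟨hs'le, c1, _⟩ := hC
  obtain ⟨hsle, _, a2⟩ := hA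
  refine ⟨by omega, ?_, ?_⟩
  · intro i j hi hij hj
    have := c1 i j hi hij (by omega)
    rwa [hw1 i (by omega), hw1 j (by omega)] at this
  · intro i j hi hij hj
    exact a2 i j (by omega) hij hj

theorem maxAC2 (hw1 : ∀ j, j ≤ s → w j = v j) {s' : ℕ}
    (hC : WC n w s) (hA : WA n v s') (hss : s < s') : WC n w (s + 1) := by
  obtain ⟨hs'le, a1, _⟩ := hA
  obtain ⟨hsle, _, c2⟩ := hC
  refine ⟨by omega, ?_, ?_⟩
  · intro i j hi hij hj
    have := a1 i j hi hij (by omega)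
    rwa [← hw1 i (by omega), ← hw1 j (by omega)] at this
  · intro i j hi hij hj
    exact c2 i j (by omega) hij hj

theorem AB_mp (hw1 : ∀ j, j ≤ s → w j = v j)
    (hw3 : ∀ j, s + 1 ≤ j → j ≤ n - 2 → w j = v (n - 1 + s - j))
    (h : WA n v s) : WB n w s := by
  obtain ⟨hsle, h1, h2⟩ := h
  refine ⟨hsle, ?_, ?_⟩
  · intro i j hi hij hj
    rw [hw1 i (by omega), hw1 j (by omega)]
    exact h1 i j hi hij hj
  · intro i j hi hij hj
    rw [hw3 i (by omega) (by omega), hw3 j (by omega) (by omega)]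
    exact h2 (n - 1 + s - j) (n - 1 + s - i) (by omega) (by omega) (by omega)

theorem AB_mpr (hw1 : ∀ j, j ≤ s → w j = v j)
    (hw3 : ∀ j, s + 1 ≤ j → j ≤ n - 2 → w j = v (n - 1 + s - j))
    (h : WB n w s) : WA n v s := by
  obtain ⟨hsle, h1, h2⟩ := h
  refine ⟨hsle, ?_, ?_⟩
  · intro i j hi hij hj
    rw [← hw1 i (by omega), ← hw1 j (by omega)]
    exact h1 i j hi hij hj
  · intro i j hi hij hj
    have e1 : w (n - 1 + s - i) = v i := by
      rw [hw3 (n - 1 + s - i) (by omega) (by omega)]; congr 1; omega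
    have e2 : w (n - 1 + s - j) = v j := by
      rw [hw3 (n - 1 + s - j) (by omega) (by omega)]; congr 1; omega
    rw [← e1, ← e2]
    exact h2 (n - 1 + s - j) (n - 1 + s - i) (by omega) (by omega) (by omega)

theorem maxAB1 (hw1 : ∀ j, j ≤ s → w j = v j) {s' : ℕ}
    (hA : WA n v s) (hB : WB n w s') (hss : s < s') : WA n v (s + 1) := by
  obtain ⟨hs'le, b1, _⟩ := hB
  obtain ⟨hsle, _, a2⟩ := hA
  refine ⟨by omega, ?_, ?_⟩
  · intro i j hi hij hj
    have := b1 i j hi hij (by omega)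
    rwa [hw1 i (by omega), hw1 j (by omega)] at this
  · intro i j hi hij hj
    exact a2 i j (by omega) hij hj

theorem maxAB2 (hw1 : ∀ j, j ≤ s → w j = v j) {s' : ℕ}
    (hB : WB n w s) (hA : WA n v s') (hss : s < s') : WB n w (s + 1) := by
  obtain ⟨hs'le, a1, _⟩ := hA
  obtain ⟨hsle, _, b2⟩ := hB
  refine ⟨by omega, ?_, ?_⟩
  · intro i j hi hij hj
    have := a1 i j hi hij (by omega)
    rwa [← hw1 i (by omega), ← hw1 j (by omega)] at this
  · intro i j hi hij hj
    exact b2 i j (by omega) hij hj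

end Transfer

end Stmt16Aux
namespace Stmt16Aux

variable {n : ℕ}

/-- The value sequence of a permutation, as a function `ℕ → ℕ`. -/
def pval (π : Equiv.Perm (Fin n)) : ℕ → ℕ := fun i =>
  if h : i < n then (π ⟨i, h⟩ : ℕ) else 0

theorem pval_inj (π : Equiv.Perm (Fin n)) :
    ∀ i j, i < n → j < n → pval π i = pval π j → i = j := by
  intro i j hi hj h
  simp only [pval, dif_pos hi, dif_pos hj] at h
  have h2 : π ⟨i, hi⟩ = π ⟨j, hj⟩ := Fin.ext h
  have h3 := π.injective h2
  simpa using congrArg Fin.val h3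

theorem pval_lt_iff (π : Equiv.Perm (Fin n)) {i j : ℕ} (hi : i < n) (hj : j < n) :
    pval π i < pval π j ↔ π ⟨i, hi⟩ < π ⟨j, hj⟩ := by
  simp only [pval, dif_pos hi, dif_pos hj, Fin.lt_def]

/-- Underlying map of the insertion cycle. -/
def gfun (n s j : ℕ) : ℕ := if j ≤ s then j else if j = s + 1 then n - 1 else j - 1

/-- Underlying inverse map of the insertion cycle. -/
def gifun (n s j : ℕ) : ℕ := if j ≤ s then j else if j = n - 1 then s + 1 else j + 1

theorem gfun_lt {n s j : ℕ} (hj : j < n) : gfun n s j < n := by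
  unfold gfun; split_ifs <;> omega

theorem gifun_lt {n s j : ℕ} (hj : j < n) : gifun n s j < n := by
  unfold gifun; split_ifs <;> omega

theorem gifun_gfun {n s j : ℕ} (hj : j < n) : gifun n s (gfun n s j) = j := by
  unfold gfun gifun; split_ifs <;> omega

theorem gfun_gifun {n s j : ℕ} (hj : j < n) : gfun n s (gifun n s j) = j := by
  unfold gfun gifun; split_ifs <;> omega

/-- Insert-last-entry cycle: position `j ≤ s` reads from `j`, position `s+1` reads
from `n-1`, positions `s+2 ≤ j ≤ n-1` read from `j-1`. -/
def rho (n s : ℕ) : Equiv.Perm (Fin n) where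
  toFun j := ⟨gfun n s j, gfun_lt j.isLt⟩
  invFun j := ⟨gifun n s j, gifun_lt j.isLt⟩
  left_inv j := Fin.ext (gifun_gfun j.isLt)
  right_inv j := Fin.ext (gfun_gifun j.isLt)

theorem pval_mul_rho (π : Equiv.Perm (Fin n)) (s j : ℕ) (hj : j < n) :
    pval (π * rho n s) j = pval π (gfun n s j) := by
  have h2 : gfun n s j < n := gfun_lt hj
  simp only [pval, dif_pos hj, dif_pos h2, Equiv.Perm.mul_apply]
  congr 2

theorem pval_rho1 (π : Equiv.Perm (Fin n)) (s : ℕ) (j : ℕ) (hj : j ≤ s) :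
    pval (π * rho n s) j = pval π j := by
  by_cases h : j < n
  · rw [pval_mul_rho π s j h]
    congr 1
    unfold gfun
    split_ifs <;> omega
  · simp [pval, dif_neg h]

theorem pval_rho3 (π : Equiv.Perm (Fin n)) (s : ℕ) (j : ℕ) (h1 : s + 2 ≤ j)
    (h2 : j ≤ n - 1) : pval (π * rho n s) j = pval π (j - 1) := by
  rw [pval_mul_rho π s j (by omega)]
  congr 1
  unfold gfun
  split_ifs <;> omega

/-- Underlying map of the segment reversal. -/
def hfun (n s j : ℕ) : ℕ := if j ≤ s ∨ n - 1 ≤ j then j else n - 1 + s - j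

theorem hfun_lt {n s j : ℕ} (hj : j < n) : hfun n s j < n := by
  unfold hfun; split_ifs <;> omega

theorem hfun_hfun {n s j : ℕ} (hj : j < n) : hfun n s (hfun n s j) = j := by
  unfold hfun; split_ifs <;> omega

/-- Reversal of the segment `[s+1, n-2]`, fixing everything else. -/
def sig (n s : ℕ) : Equiv.Perm (Fin n) where
  toFun j := ⟨hfun n s j, hfun_lt j.isLt⟩
  invFun j := ⟨hfun n s j, hfun_lt j.isLt⟩
  left_inv j := Fin.ext (hfun_hfun j.isLt)
  right_inv j := Fin.ext (hfun_hfun j.isLt)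

theorem pval_mul_sig (π : Equiv.Perm (Fin n)) (s j : ℕ) (hj : j < n) :
    pval (π * sig n s) j = pval π (hfun n s j) := by
  have h2 : hfun n s j < n := hfun_lt hj
  simp only [pval, dif_pos hj, dif_pos h2, Equiv.Perm.mul_apply]
  congr 2

theorem pval_sig1 (π : Equiv.Perm (Fin n)) (s : ℕ) (j : ℕ) (hj : j ≤ s) :
    pval (π * sig n s) j = pval π j := by
  by_cases h : j < n
  · rw [pval_mul_sig π s j h]
    congr 1
    unfold hfun
    split_ifs <;> omega
  · simp [pval, dif_neg h]

theorem pval_sig3 (π : Equiv.Perm (Fin n)) (s : ℕ) (j : ℕ) (h1 : s + 1 ≤ j)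
    (h2 : j ≤ n - 2) : pval (π * sig n s) j = pval π (n - 1 + s - j) := by
  rw [pval_mul_sig π s j (by omega)]
  congr 1
  unfold hfun
  split_ifs <;> omega

end Stmt16Aux
namespace Stmt16Aux

variable {n : ℕ}

theorem fin5_strictMono {f : Fin 5 → Fin n}
    (h01 : f 0 < f 1) (h12 : f 1 < f 2) (h23 : f 2 < f 3) (h34 : f 3 < f 4) :
    StrictMono f := by
  intro a b hab
  fin_cases a <;> fin_cases b <;>
    first
      | exact absurd hab (by decide)
      | exact h01
      | exact h12
      | exact h23
      | exact h34
      | exact lt_trans h01 h12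
      | exact lt_trans h12 h23
      | exact lt_trans h23 h34
      | exact lt_trans h01 (lt_trans h12 h23)
      | exact lt_trans h12 (lt_trans h23 h34)
      | exact lt_trans h01 (lt_trans h12 (lt_trans h23 h34))

theorem occursA_iff (π : Equiv.Perm (Fin n)) :
    pop12c34i5.Occurs π ↔ OccA n (pval π) := by
  constructor
  · rintro ⟨f, hm, hr⟩
    have l10 : π (f 1) < π (f 0) := hr 1 0 (Or.inl ⟨rfl, rfl⟩)
    have l32 : π (f 3) < π (f 2) := hr 3 2 (Or.inr ⟨rfl, rfl⟩)
    refine ⟨f 0, f 1, f 2, f 3, f 4, hm (by decide), hm (by decide), hm (by decide),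
      hm (by decide), (f 4).isLt, ?_, ?_⟩
    · exact (pval_lt_iff π (f 1).isLt (f 0).isLt).mpr (by simpa using l10)
    · exact (pval_lt_iff π (f 3).isLt (f 2).isLt).mpr (by simpa using l32)
  · rintro ⟨i0, i1, i2, i3, i4, o1, o2, o3, o4, o5, w1, w2⟩
    have h0 : i0 < n := by omega
    have h1 : i1 < n := by omega
    have h2 : i2 < n := by omega
    have h3 : i3 < n := by omega
    refine ⟨![⟨i0, h0⟩, ⟨i1, h1⟩, ⟨i2, h2⟩, ⟨i3, h3⟩, ⟨i4, o5⟩], ?_, ?_⟩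
    · apply fin5_strictMono <;> simp [Fin.lt_def] <;> omega
    · intro a b hab
      fin_cases a <;> fin_cases b <;>
        simp only [pop12c34i5] at hab <;>
        first
          | omega
          | · simp only [Matrix.cons_val_zero, Matrix.cons_val_one, Matrix.head_cons,
                Matrix.cons_val_two, Matrix.tail_cons, Matrix.cons_val_three,
                Matrix.cons_val_four]
              first
                | exact (pval_lt_iff π h1 h0).mp w1
                | exact (pval_lt_iff π h3 h2).mp w2

theorem occursB_iff (π : Equiv.Perm (Fin n)) :
    pop12c43i5.Occurs π ↔ OccB n (pval π) := by
  constructor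
  · rintro ⟨f, hm, hr⟩
    have l10 : π (f 1) < π (f 0) := hr 1 0 (Or.inl ⟨rfl, rfl⟩)
    have l23 : π (f 2) < π (f 3) := hr 2 3 (Or.inr ⟨rfl, rfl⟩)
    refine ⟨f 0, f 1, f 2, f 3, f 4, hm (by decide), hm (by decide), hm (by decide),
      hm (by decide), (f 4).isLt, ?_, ?_⟩
    · exact (pval_lt_iff π (f 1).isLt (f 0).isLt).mpr (by simpa using l10)
    · exact (pval_lt_iff π (f 2).isLt (f 3).isLt).mpr (by simpa using l23)
  · rintro ⟨i0, i1, i2, i3, i4, o1, o2, o3, o4, o5, w1, w2⟩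
    have h0 : i0 < n := by omega
    have h1 : i1 < n := by omega
    have h2 : i2 < n := by omega
    have h3 : i3 < n := by omega
    refine ⟨![⟨i0, h0⟩, ⟨i1, h1⟩, ⟨i2, h2⟩, ⟨i3, h3⟩, ⟨i4, o5⟩], ?_, ?_⟩
    · apply fin5_strictMono <;> simp [Fin.lt_def] <;> omega
    · intro a b hab
      fin_cases a <;> fin_cases b <;>
        simp only [pop12c43i5] at hab <;>
        first
          | omega
          | · simp only [Matrix.cons_val_zero, Matrix.cons_val_one, Matrix.head_cons,
                Matrix.cons_val_two, Matrix.tail_cons, Matrix.cons_val_three,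
                Matrix.cons_val_four]
              first
                | exact (pval_lt_iff π h1 h0).mp w1
                | exact (pval_lt_iff π h2 h3).mp w2

theorem occursC_iff (π : Equiv.Perm (Fin n)) :
    pop12c45i3.Occurs π ↔ OccC n (pval π) := by
  constructor
  · rintro ⟨f, hm, hr⟩
    have l10 : π (f 1) < π (f 0) := hr 1 0 (Or.inl ⟨rfl, rfl⟩)
    have l43 : π (f 4) < π (f 3) := hr 4 3 (Or.inr ⟨rfl, rfl⟩)
    refine ⟨f 0, f 1, f 2, f 3, f 4, hm (by decide), hm (by decide), hm (by decide),
      hm (by decide), (f 4).isLt, ?_, ?_⟩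
    · exact (pval_lt_iff π (f 1).isLt (f 0).isLt).mpr (by simpa using l10)
    · exact (pval_lt_iff π (f 4).isLt (f 3).isLt).mpr (by simpa using l43)
  · rintro ⟨i0, i1, i2, i3, i4, o1, o2, o3, o4, o5, w1, w2⟩
    have h0 : i0 < n := by omega
    have h1 : i1 < n := by omega
    have h2 : i2 < n := by omega
    have h3 : i3 < n := by omega
    refine ⟨![⟨i0, h0⟩, ⟨i1, h1⟩, ⟨i2, h2⟩, ⟨i3, h3⟩, ⟨i4, o5⟩], ?_, ?_⟩
    · apply fin5_strictMono <;> simp [Fin.lt_def] <;> omega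
    · intro a b hab
      fin_cases a <;> fin_cases b <;>
        simp only [pop12c45i3] at hab <;>
        first
          | omega
          | · simp only [Matrix.cons_val_zero, Matrix.cons_val_one, Matrix.head_cons,
                Matrix.cons_val_two, Matrix.tail_cons, Matrix.cons_val_three,
                Matrix.cons_val_four]
              first
                | exact (pval_lt_iff π h1 h0).mp w1
                | exact (pval_lt_iff π o5 h3).mp w2

end Stmt16Aux
namespace Stmt16Aux

theorem occurs_small {n : ℕ} (hn : n ≤ 4) (π : Equiv.Perm (Fin n)) :
    ¬ pop12c34i5.Occurs π ∧ ¬ pop12c43i5.Occurs π ∧ ¬ pop12c45i3.Occurs π := by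
  refine ⟨fun h => ?_, fun h => ?_, fun h => ?_⟩
  · rw [occursA_iff] at h; obtain ⟨a, b, c, d, e, h1, h2, h3, h4, h5, -, -⟩ := h; omega
  · rw [occursB_iff] at h; obtain ⟨a, b, c, d, e, h1, h2, h3, h4, h5, -, -⟩ := h; omega
  · rw [occursC_iff] at h; obtain ⟨a, b, c, d, e, h1, h2, h3, h4, h5, -, -⟩ := h; omega

theorem avoidersAC (n : ℕ) : pop12c34i5.avoiders n = pop12c45i3.avoiders n := by
  classical
  unfold POP.avoiders
  by_cases hn : n ≤ 4
  · exact Nat.card_congr (Equiv.subtypeEquivRight fun π =>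
      iff_of_true (occurs_small hn π).1 (occurs_small hn π).2.2)
  · push_neg at hn
    set SA : Equiv.Perm (Fin n) → ℕ :=
      fun π => Nat.findGreatest (WA n (pval π)) (n - 2) with hSA
    set SC : Equiv.Perm (Fin n) → ℕ :=
      fun π => Nat.findGreatest (WC n (pval π)) (n - 2) with hSC
    have hF : ∀ π : Equiv.Perm (Fin n), ¬ pop12c34i5.Occurs π →
        ¬ pop12c45i3.Occurs (π * rho n (SA π)) ∧ SC (π * rho n (SA π)) = SA π := by
      intro π h
      have hWA : WA n (pval π) (SA π) := by
        rw [occursA_iff] at h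
        obtain ⟨s, hs⟩ := (charA (pval_inj π)).mp h
        exact Nat.findGreatest_spec hs.1 hs
      have hle : SA π ≤ n - 2 := hWA.1
      have hw1 := pval_rho1 π (SA π)
      have hw3 := pval_rho3 π (SA π)
      have hWC : WC n (pval (π * rho n (SA π))) (SA π) := AC_mp hw1 hw3 hWA
      have hnoC : ¬ OccC n (pval (π * rho n (SA π))) :=
        (charC (pval_inj _)).mpr ⟨SA π, hWC⟩
      refine ⟨by rwa [occursC_iff], ?_⟩
      have hge : SA π ≤ SC (π * rho n (SA π)) := Nat.le_findGreatest hle hWC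
      rcases Nat.lt_or_ge (SA π) (SC (π * rho n (SA π))) with hlt | hge2
      · exfalso
        have hWC' : WC n (pval (π * rho n (SA π))) (SC (π * rho n (SA π))) :=
          Nat.findGreatest_spec hle hWC
        have hWA' : WA n (pval π) (SA π + 1) := maxAC1 hw1 hWA hWC' hlt
        have : SA π + 1 ≤ SA π := Nat.le_findGreatest hWA'.1 hWA'
        omega
      · omega
    have hG : ∀ q : Equiv.Perm (Fin n), ¬ pop12c45i3.Occurs q →
        ¬ pop12c34i5.Occurs (q * (rho n (SC q))⁻¹) ∧ SA (q * (rho n (SC q))⁻¹) = SC q := by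
      intro q h
      have hWC : WC n (pval q) (SC q) := by
        rw [occursC_iff] at h
        obtain ⟨s, hs⟩ := (charC (pval_inj q)).mp h
        exact Nat.findGreatest_spec hs.1 hs
      have hle : SC q ≤ n - 2 := hWC.1
      have hq : (q * (rho n (SC q))⁻¹) * rho n (SC q) = q :=
        inv_mul_cancel_right q (rho n (SC q))
      have hw1 : ∀ j, j ≤ SC q → pval q j = pval (q * (rho n (SC q))⁻¹) j := by
        intro j hj
        conv_lhs => rw [← hq]
        exact pval_rho1 _ (SC q) j hj
      have hw3 : ∀ j, SC q + 2 ≤ j → j ≤ n - 1 →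
          pval q j = pval (q * (rho n (SC q))⁻¹) (j - 1) := by
        intro j h1 h2
        conv_lhs => rw [← hq]
        exact pval_rho3 _ (SC q) j h1 h2
      have hWA : WA n (pval (q * (rho n (SC q))⁻¹)) (SC q) := AC_mpr hw1 hw3 hWC
      have hnoA : ¬ OccA n (pval (q * (rho n (SC q))⁻¹)) :=
        (charA (pval_inj _)).mpr ⟨SC q, hWA⟩
      refine ⟨by rwa [occursA_iff], ?_⟩
      have hge : SC q ≤ SA (q * (rho n (SC q))⁻¹) := Nat.le_findGreatest hle hWA
      rcases Nat.lt_or_ge (SC q) (SA (q * (rho n (SC q))⁻¹)) with hlt | hge2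
      · exfalso
        have hWA' : WA n (pval (q * (rho n (SC q))⁻¹)) (SA (q * (rho n (SC q))⁻¹)) :=
          Nat.findGreatest_spec hle hWA
        have hWC' : WC n (pval q) (SC q + 1) := maxAC2 hw1 hWC hWA' hlt
        have : SC q + 1 ≤ SC q := Nat.le_findGreatest hWC'.1 hWC'
        omega
      · omega
    refine Nat.card_congr
      ⟨fun x => ⟨x.1 * rho n (SA x.1), (hF x.1 x.2).1⟩,
       fun y => ⟨y.1 * (rho n (SC y.1))⁻¹, (hG y.1 y.2).1⟩, ?_, ?_⟩
    · rintro ⟨π, h⟩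
      apply Subtype.ext
      simp only
      rw [(hF π h).2]
      exact mul_inv_cancel_right π (rho n (SA π))
    · rintro ⟨q, h⟩
      apply Subtype.ext
      simp only
      rw [(hG q h).2]
      exact inv_mul_cancel_right q (rho n (SC q))

theorem avoidersAB (n : ℕ) : pop12c34i5.avoiders n = pop12c43i5.avoiders n := by
  classical
  unfold POP.avoiders
  by_cases hn : n ≤ 4
  · exact Nat.card_congr (Equiv.subtypeEquivRight fun π =>
      iff_of_true (occurs_small hn π).1 (occurs_small hn π).2.1)
  · push_neg at hn
    set SA : Equiv.Perm (Fin n) → ℕ :=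
      fun π => Nat.findGreatest (WA n (pval π)) (n - 2) with hSA
    set SB : Equiv.Perm (Fin n) → ℕ :=
      fun π => Nat.findGreatest (WB n (pval π)) (n - 2) with hSB
    have hF : ∀ π : Equiv.Perm (Fin n), ¬ pop12c34i5.Occurs π →
        ¬ pop12c43i5.Occurs (π * sig n (SA π)) ∧ SB (π * sig n (SA π)) = SA π := by
      intro π h
      have hWA : WA n (pval π) (SA π) := by
        rw [occursA_iff] at h
        obtain ⟨s, hs⟩ := (charA (pval_inj π)).mp h
        exact Nat.findGreatest_spec hs.1 hs
      have hle : SA π ≤ n - 2 := hWA.1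
      have hw1 := pval_sig1 π (SA π)
      have hw3 := pval_sig3 π (SA π)
      have hWB : WB n (pval (π * sig n (SA π))) (SA π) := AB_mp hw1 hw3 hWA
      have hnoB : ¬ OccB n (pval (π * sig n (SA π))) :=
        (charB (pval_inj _)).mpr ⟨SA π, hWB⟩
      refine ⟨by rwa [occursB_iff], ?_⟩
      have hge : SA π ≤ SB (π * sig n (SA π)) := Nat.le_findGreatest hle hWB
      rcases Nat.lt_or_ge (SA π) (SB (π * sig n (SA π))) with hlt | hge2
      · exfalso
        have hWB' : WB n (pval (π * sig n (SA π))) (SB (π * sig n (SA π))) :=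
          Nat.findGreatest_spec hle hWB
        have hWA' : WA n (pval π) (SA π + 1) := maxAB1 hw1 hWA hWB' hlt
        have : SA π + 1 ≤ SA π := Nat.le_findGreatest hWA'.1 hWA'
        omega
      · omega
    have hG : ∀ q : Equiv.Perm (Fin n), ¬ pop12c43i5.Occurs q →
        ¬ pop12c34i5.Occurs (q * (sig n (SB q))⁻¹) ∧ SA (q * (sig n (SB q))⁻¹) = SB q := by
      intro q h
      have hWB : WB n (pval q) (SB q) := by
        rw [occursB_iff] at h
        obtain ⟨s, hs⟩ := (charB (pval_inj q)).mp h
        exact Nat.findGreatest_spec hs.1 hs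
      have hle : SB q ≤ n - 2 := hWB.1
      have hq : (q * (sig n (SB q))⁻¹) * sig n (SB q) = q :=
        inv_mul_cancel_right q (sig n (SB q))
      have hw1 : ∀ j, j ≤ SB q → pval q j = pval (q * (sig n (SB q))⁻¹) j := by
        intro j hj
        conv_lhs => rw [← hq]
        exact pval_sig1 _ (SB q) j hj
      have hw3 : ∀ j, SB q + 1 ≤ j → j ≤ n - 2 →
          pval q j = pval (q * (sig n (SB q))⁻¹) (n - 1 + SB q - j) := by
        intro j h1 h2
        conv_lhs => rw [← hq]
        exact pval_sig3 _ (SB q) j h1 h2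
      have hWA : WA n (pval (q * (sig n (SB q))⁻¹)) (SB q) := AB_mpr hw1 hw3 hWB
      have hnoA : ¬ OccA n (pval (q * (sig n (SB q))⁻¹)) :=
        (charA (pval_inj _)).mpr ⟨SB q, hWA⟩
      refine ⟨by rwa [occursA_iff], ?_⟩
      have hge : SB q ≤ SA (q * (sig n (SB q))⁻¹) := Nat.le_findGreatest hle hWA
      rcases Nat.lt_or_ge (SB q) (SA (q * (sig n (SB q))⁻¹)) with hlt | hge2
      · exfalso
        have hWA' : WA n (pval (q * (sig n (SB q))⁻¹)) (SA (q * (sig n (SB q))⁻¹)) :=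
          Nat.findGreatest_spec hle hWA
        have hWB' : WB n (pval q) (SB q + 1) := maxAB2 hw1 hWB hWA' hlt
        have : SB q + 1 ≤ SB q := Nat.le_findGreatest hWB'.1 hWB'
        omega
      · omega
    refine Nat.card_congr
      ⟨fun x => ⟨x.1 * sig n (SA x.1), (hF x.1 x.2).1⟩,
       fun y => ⟨y.1 * (sig n (SB y.1))⁻¹, (hG y.1 y.2).1⟩, ?_, ?_⟩
    · rintro ⟨π, h⟩
      apply Subtype.ext
      simp only
      rw [(hF π h).2]
      exact mul_inv_cancel_right π (sig n (SA π))
    · rintro ⟨q, h⟩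
      apply Subtype.ext
      simp only
      rw [(hG q h).2]
      exact inv_mul_cancel_right q (sig n (SB q))

end Stmt16Aux
/-- The POPs `(1,2;3,4;5)`, `(1,2;4,3;5)`, `(1,2;4,5;3)` are pairwise Wilf-equivalent. -/
theorem stmt16 :
    ∀ P ∈ [pop12c34i5, pop12c43i5, pop12c45i3],
      ∀ Q ∈ [pop12c34i5, pop12c43i5, pop12c45i3],
        WilfEquiv P Q := by
  have hAC := Stmt16Aux.avoidersAC
  have hAB := Stmt16Aux.avoidersAB
  intro P hP Q hQ
  fin_cases hP <;> fin_cases hQ <;> intro n hn <;>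
    first
      | rfl
      | exact hAB n
      | exact hAC n
      | exact (hAB n).symm
      | exact (hAC n).symm
      | exact (hAB n).symm.trans (hAC n)
      | exact (hAC n).symm.trans (hAB n)
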